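/- arXiv:1305.7002 — 4 statements merged into one kernel-verified Lean document; each statement's English description precedes it below -/
import Mathlib

section
/- Let A and B be positive self-adjoint operators such that the form sum A+B is densely defined. Then for every positive integer n, the form sum A^{1/2^n} + B^{1/2^n} is densely defined and (A+B)^{1/2^n} ≥ 2^{-1+2^{-n}} (A^{1/2^n} + B^{1/2^n}) in the form sense. -/
open scoped InnerProductSpace NNReal

section Auxiliary

lemma srad_le_swap {A : Type*} [NormedRing A] [NormedAlgebra ℂ A] (a b : A) :
    spectralRadius ℂ (a * b) ≤ spectralRadius ℂ (b * a) := by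
  have h := spectrum.nonzero_mul_comm (𝕜 := ℂ) a b
  unfold spectralRadius
  refine iSup₂_le fun k hk => ?_
  rcases eq_or_ne k 0 with rfl | hk0
  · simp
  · have hk' : k ∈ spectrum ℂ (b * a) := (h ▸ Set.mem_diff_singleton.mpr ⟨hk, hk0⟩).1
    exact le_iSup₂ (f := fun k _ => (‖k‖₊ : ENNReal)) k hk'

lemma srad_swap {A : Type*} [NormedRing A] [NormedAlgebra ℂ A] (a b : A) :
    spectralRadius ℂ (a * b) = spectralRadius ℂ (b * a) :=
  le_antisymm (srad_le_swap a b) (srad_le_swap b a)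

variable {A' : Type*} [CStarAlgebra A'] [PartialOrder A'] [StarOrderedRing A']

lemma sqrt_mono_of_isUnit {a b : A'} (ha : 0 ≤ a) (hb : 0 ≤ b) (hbu : IsUnit b) (hab : a ≤ b) :
    CFC.sqrt a ≤ CFC.sqrt b := by
  nontriviality A'
  have h0b : (0:ℝ≥0) ∉ spectrum ℝ≥0 b := spectrum.zero_notMem ℝ≥0 hbu
  have hsb : CFC.sqrt b * b ^ (-(1/2) : ℝ) = 1 := by
    rw [CFC.sqrt_eq_rpow, ← CFC.rpow_add hbu]
    norm_num [CFC.rpow_zero b hb]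
  have hsb' : b ^ (-(1/2) : ℝ) * CFC.sqrt b = 1 := by
    rw [CFC.sqrt_eq_rpow, ← CFC.rpow_add hbu]
    norm_num [CFC.rpow_zero b hb]
  have hsbu : IsUnit (CFC.sqrt b) := ⟨⟨CFC.sqrt b, b ^ (-(1/2) : ℝ), hsb, hsb'⟩, rfl⟩
  rw [le_iff_norm_sqrt_mul_rpow (CFC.sqrt a) (CFC.sqrt b) (CFC.sqrt_nonneg _)
    (hsbu.isStrictlyPositive (CFC.sqrt_nonneg _))]
  have hq : (CFC.sqrt b) ^ (-(1/2) : ℝ) = b ^ (-(1/4) : ℝ) := by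
    rw [CFC.rpow_sqrt b _ hbu hb]
    norm_num
  rw [hq]
  set p := CFC.sqrt (CFC.sqrt a) with hp
  set q := b ^ (-(1/4) : ℝ) with hqdef
  have hpnn : 0 ≤ p := CFC.sqrt_nonneg _
  have hqnn : 0 ≤ q := CFC.rpow_nonneg
  have hpsa : IsSelfAdjoint p := .of_nonneg hpnn
  have hqsa : IsSelfAdjoint q := .of_nonneg hqnn
  set c := q * CFC.sqrt a * q with hc
  have h1 : ‖p * q‖^2 = ‖c‖ := by
    rw [sq, ← CStarRing.norm_star_mul_self, star_mul, hpsa.star_eq, hqsa.star_eq]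
    congr 1
    rw [hc, hp, mul_assoc q, ← mul_assoc p p q, CFC.sqrt_mul_sqrt_self (CFC.sqrt a) (CFC.sqrt_nonneg _),
      ← mul_assoc]
  have hcnn : 0 ≤ c := conjugate_nonneg_of_nonneg (CFC.sqrt_nonneg _) hqnn
  have hqq : q * q = b ^ (-(1/2) : ℝ) := by
    rw [hqdef, ← CFC.rpow_add hbu]
    norm_num
  set m := CFC.sqrt a * b ^ (-(1/2) : ℝ) with hm
  have h2 : ‖c‖^2 = ‖c * c‖ := by
    rw [sq, ← CStarRing.norm_star_mul_self, (IsSelfAdjoint.of_nonneg hcnn).star_eq]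
  have hcc : c * c = q * (CFC.sqrt a * b ^ (-(1/2) : ℝ) * CFC.sqrt a * q) := by
    rw [← hqq, hc]
    simp only [mul_assoc]
  have hccnn : 0 ≤ c * c := by
    have := star_mul_self_nonneg c
    rwa [(IsSelfAdjoint.of_nonneg hcnn).star_eq] at this
  have h4 : spectralRadius ℂ (c * c) = spectralRadius ℂ (m * m) := by
    rw [hcc, srad_swap]
    congr 1
    rw [hm, ← hqq]
    simp only [mul_assoc]
  have h5 : ‖c * c‖₊ ≤ ‖m * m‖₊ := by
    have := (IsSelfAdjoint.of_nonneg hccnn).spectralRadius_eq_nnnorm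
    rw [← ENNReal.coe_le_coe, ← this, h4]
    exact spectrum.spectralRadius_le_nnnorm (𝕜 := ℂ) (m * m)
  have h6 : ‖m‖^2 = ‖b ^ (-(1/2) : ℝ) * a * b ^ (-(1/2) : ℝ)‖ := by
    rw [sq, ← CStarRing.norm_star_mul_self, hm, star_mul,
      (IsSelfAdjoint.of_nonneg (CFC.rpow_nonneg (a := b) (y := (-(1/2) : ℝ)))).star_eq,
      (IsSelfAdjoint.of_nonneg (CFC.sqrt_nonneg (a := a))).star_eq]
    congr 1
    rw [mul_assoc, ← mul_assoc (CFC.sqrt a), CFC.sqrt_mul_sqrt_self a ha, ← mul_assoc]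
  have h7 : ‖b ^ (-(1/2) : ℝ) * a * b ^ (-(1/2) : ℝ)‖ ≤ 1 := by
    have hwle : b ^ (-(1/2) : ℝ) * a * b ^ (-(1/2) : ℝ) ≤ 1 := by
      calc b ^ (-(1/2) : ℝ) * a * b ^ (-(1/2) : ℝ)
          ≤ b ^ (-(1/2) : ℝ) * b * b ^ (-(1/2) : ℝ) :=
            (IsSelfAdjoint.of_nonneg (CFC.rpow_nonneg (a := b) (y := (-(1/2) : ℝ)))).conjugate_le_conjugate hab
        _ = 1 := CFC.conjugate_rpow_neg_one_half b (hbu.isStrictlyPositive hb)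
    exact (CStarAlgebra.norm_le_one_iff_of_nonneg _
      (conjugate_nonneg_of_nonneg ha CFC.rpow_nonneg)).mpr hwle
  -- chain
  have hmm : ‖c‖^2 ≤ 1 := by
    calc ‖c‖^2 = ‖c * c‖ := h2
      _ ≤ ‖m * m‖ := by exact_mod_cast h5
      _ ≤ ‖m‖ * ‖m‖ := norm_mul_le m m
      _ = ‖m‖^2 := (sq ‖m‖).symm
      _ ≤ 1 := by rw [h6]; exact h7
  have hcle : ‖c‖ ≤ 1 := by
    rw [← sq_le_one_iff₀ (norm_nonneg c)]
    exact hmm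
  rw [← sq_le_one_iff₀ (norm_nonneg (p * q)), h1]
  exact hcle

lemma nnsqrt_add_le (t ε : ℝ≥0) : NNReal.sqrt (t + ε^2) ≤ NNReal.sqrt t + ε := by
  rw [← NNReal.sqrt_sq (NNReal.sqrt t + ε), NNReal.sqrt_le_sqrt, add_sq, NNReal.sq_sqrt]
  exact add_le_add (le_add_right le_rfl) le_rfl

lemma sqrt_add_const_le (b : A') (hb : 0 ≤ b) (ε : ℝ≥0) :
    CFC.sqrt (b + algebraMap ℝ≥0 A' (ε^2)) ≤ CFC.sqrt b + algebraMap ℝ≥0 A' ε := by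
  have h1 : b + algebraMap ℝ≥0 A' (ε^2) = cfc (fun t : ℝ≥0 => t + ε^2) b := by
    have := cfc_add b id (fun _ => ε^2)
    rw [show (fun t : ℝ≥0 => t + ε^2) = (fun t : ℝ≥0 => id t + (fun _ : ℝ≥0 => ε^2) t) from rfl,
      this, cfc_id ℝ≥0 b, cfc_const _ b]
  rw [h1, CFC.sqrt_eq_cfc, ← cfc_comp' NNReal.sqrt _ b (by fun_prop) (by fun_prop)]
  have h2 : CFC.sqrt b + algebraMap ℝ≥0 A' ε = cfc (fun t : ℝ≥0 => NNReal.sqrt t + ε) b := by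
    have := cfc_add b NNReal.sqrt (fun _ => ε)
    rw [show (fun t : ℝ≥0 => NNReal.sqrt t + ε) = (fun t : ℝ≥0 => NNReal.sqrt t + (fun _ : ℝ≥0 => ε) t) from rfl,
      this, cfc_const _ b, CFC.sqrt_eq_cfc]
  rw [h2]
  exact cfc_mono fun t _ => nnsqrt_add_le t ε

lemma algebraMap_nnreal_nonneg (r : ℝ≥0) : (0:A') ≤ algebraMap ℝ≥0 A' r := by
  rw [Algebra.algebraMap_eq_smul_one]
  exact smul_nonneg (zero_le : (0:ℝ≥0) ≤ r) (by simpa using star_mul_self_nonneg (1:A))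

lemma sqrt_mono' {a b : A'} (ha : 0 ≤ a) (hab : a ≤ b) : CFC.sqrt a ≤ CFC.sqrt b := by
  have hb : 0 ≤ b := ha.trans hab
  have key : ∀ ε : ℝ≥0, 0 < ε → CFC.sqrt a ≤ CFC.sqrt b + algebraMap ℝ≥0 A' ε := by
    intro ε hε
    have h1 : (0:A') ≤ algebraMap ℝ≥0 A' (ε^2) := algebraMap_nnreal_nonneg _
    have hbu : IsUnit (b + algebraMap ℝ≥0 A' (ε^2)) := by
      refine CStarAlgebra.isUnit_of_le (algebraMap ℝ≥0 A' (ε^2)) ?_ (IsUnit.isStrictlyPositive ?_ h1)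
      · exact le_add_of_nonneg_left hb
      · exact (IsUnit.map (algebraMap ℝ≥0 A') (isUnit_iff_ne_zero.mpr (by positivity)))
    have h2 : a ≤ b + algebraMap ℝ≥0 A' (ε^2) :=
      hab.trans (le_add_of_nonneg_right h1)
    exact (sqrt_mono_of_isUnit ha (hb.trans (le_add_of_nonneg_right h1)) hbu h2).trans
      (sqrt_add_const_le b hb ε)
  have hcl : IsClosed {x : A' | 0 ≤ x} := CStarAlgebra.isClosed_nonneg
  have htend : Filter.Tendsto (fun ε : ℝ≥0 => CFC.sqrt b + algebraMap ℝ≥0 A' ε - CFC.sqrt a)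
      (nhdsWithin 0 (Set.Ioi 0)) (nhds (CFC.sqrt b - CFC.sqrt a)) := by
    have hc : Continuous (fun ε : ℝ≥0 => CFC.sqrt b + algebraMap ℝ≥0 A' ε - CFC.sqrt a) := by
      simp only [Algebra.algebraMap_eq_smul_one]
      fun_prop
    have := hc.continuousAt (x := 0)
    have h0 : CFC.sqrt b + algebraMap ℝ≥0 A' 0 - CFC.sqrt a = CFC.sqrt b - CFC.sqrt a := by simp
    exact h0 ▸ (this.tendsto.mono_left nhdsWithin_le_nhds)
  have hmem : (CFC.sqrt b - CFC.sqrt a) ∈ {x : A' | 0 ≤ x} := by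
    refine hcl.mem_of_tendsto htend ?_
    filter_upwards [self_mem_nhdsWithin] with ε hε
    have := key ε hε
    simpa [sub_nonneg] using this
  rw [← sub_nonneg]
  exact hmem

lemma sqrt_smul' {r : ℝ} (hr : 0 ≤ r) {x : A'} (hx : 0 ≤ x) :
    CFC.sqrt (r • x) = Real.sqrt r • CFC.sqrt x := by
  refine CFC.sqrt_unique ?_ (smul_nonneg (Real.sqrt_nonneg r) (CFC.sqrt_nonneg _))
  rw [smul_mul_smul_comm, Real.mul_self_sqrt hr, CFC.sqrt_mul_sqrt_self x hx]

lemma base_ineq (a b : A') (ha : 0 ≤ a) (hb : 0 ≤ b) :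
    Real.sqrt 2⁻¹ • (CFC.sqrt a + CFC.sqrt b) ≤ CFC.sqrt (a + b) := by
  set s := CFC.sqrt a + CFC.sqrt b with hsdef
  have hs : 0 ≤ s := add_nonneg (CFC.sqrt_nonneg _) (CFC.sqrt_nonneg _)
  have hssnn : 0 ≤ s * s := by
    have := star_mul_self_nonneg s
    rwa [(IsSelfAdjoint.of_nonneg hs).star_eq] at this
  have hss : s * s ≤ (2:ℝ) • (a + b) := by
    set d := CFC.sqrt a - CFC.sqrt b with hddef
    have hd : IsSelfAdjoint d :=
      (IsSelfAdjoint.of_nonneg (CFC.sqrt_nonneg (a := a))).sub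
        (IsSelfAdjoint.of_nonneg (CFC.sqrt_nonneg (a := b)))
    have h0 : 0 ≤ d * d := by
      have := star_mul_self_nonneg d
      rwa [hd.star_eq] at this
    have hsum : s * s + d * d = (2:ℝ) • (a + b) := by
      rw [hsdef, hddef, two_smul]
      rw [mul_add, add_mul, add_mul, mul_sub, sub_mul, sub_mul,
        CFC.sqrt_mul_sqrt_self a ha, CFC.sqrt_mul_sqrt_self b hb]
      abel
    calc s * s ≤ s * s + d * d := le_add_of_nonneg_right h0
      _ = (2:ℝ) • (a + b) := hsum
  have h2 : (2:ℝ)⁻¹ • (s * s) ≤ a + b := by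
    have := smul_le_smul_of_nonneg_left hss (by norm_num : (0:ℝ) ≤ 2⁻¹)
    rwa [smul_smul, inv_mul_cancel₀ (by norm_num : (2:ℝ) ≠ 0), one_smul] at this
  have h3 := sqrt_mono' (smul_nonneg (by norm_num : (0:ℝ) ≤ 2⁻¹) hssnn) h2
  rwa [sqrt_smul' (by norm_num : (0:ℝ) ≤ 2⁻¹) hssnn, CFC.sqrt_mul_self s hs] at h3

lemma iterate_sqrt_nonneg {x : A'} (hx : 0 ≤ x) (n : ℕ) : 0 ≤ CFC.sqrt^[n] x := by
  cases n with
  | zero => exact hx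
  | succ n => rw [Function.iterate_succ_apply']; exact CFC.sqrt_nonneg _

lemma const_step (n : ℕ) :
    Real.sqrt ((2:ℝ) ^ (-1 + (2:ℝ) ^ (-(n:ℝ)))) * Real.sqrt 2⁻¹
      = (2:ℝ) ^ (-1 + (2:ℝ) ^ (-((n:ℝ)+1))) := by
  have h2 : (0:ℝ) ≤ 2 := by norm_num
  rw [Real.sqrt_eq_rpow, Real.sqrt_eq_rpow, show ((2:ℝ)⁻¹) = (2:ℝ) ^ (-1:ℝ) from (Real.rpow_neg_one 2).symm,
    ← Real.rpow_mul h2, ← Real.rpow_mul h2, ← Real.rpow_add (by norm_num : (0:ℝ) < 2)]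
  congr 1
  have : (2:ℝ) ^ (-((n:ℝ)+1)) = (2:ℝ) ^ (-(n:ℝ)) * (2:ℝ) ^ (-(1:ℝ)) := by
    rw [← Real.rpow_add (by norm_num : (0:ℝ) < 2)]; ring_nf
  rw [this, Real.rpow_neg_one]
  push_cast
  ring

lemma iter_ineq (a b : A') (ha : 0 ≤ a) (hb : 0 ≤ b) :
    ∀ n : ℕ, 1 ≤ n →
      ((2:ℝ) ^ (-1 + (2:ℝ) ^ (-(n:ℝ)))) • (CFC.sqrt^[n] a + CFC.sqrt^[n] b)
        ≤ CFC.sqrt^[n] (a + b) := by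
  intro n
  induction n with
  | zero => omega
  | succ n IH =>
    intro _
    rcases Nat.eq_or_lt_of_le (Nat.one_le_iff_ne_zero.mpr (Nat.succ_ne_zero n)) with h1 | h1
    · -- n + 1 = 1
      have hn0 : n = 0 := by omega
      subst hn0
      norm_num [Function.iterate_one]
      have heq : (2:ℝ) ^ (-(1/2:ℝ)) = Real.sqrt 2⁻¹ := by
        rw [Real.sqrt_eq_rpow, show ((2:ℝ)⁻¹) = (2:ℝ) ^ (-1:ℝ) from (Real.rpow_neg_one 2).symm,
          ← Real.rpow_mul (by norm_num)]
        norm_num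
      rw [← smul_add, heq]
      exact base_ineq a b ha hb
    · have hn1 : 1 ≤ n := by omega
      have IH := IH hn1
      set cn := (2:ℝ) ^ (-1 + (2:ℝ) ^ (-(n:ℝ))) with hcn
      have hcnpos : 0 ≤ cn := (Real.rpow_pos_of_pos (by norm_num) _).le
      have hSa := iterate_sqrt_nonneg ha n
      have hSb := iterate_sqrt_nonneg hb n
      have step1 : CFC.sqrt (cn • (CFC.sqrt^[n] a + CFC.sqrt^[n] b)) ≤ CFC.sqrt^[n+1] (a+b) := by
        rw [Function.iterate_succ_apply']
        exact sqrt_mono' (smul_nonneg hcnpos (add_nonneg hSa hSb)) IH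
      rw [sqrt_smul' hcnpos (add_nonneg hSa hSb)] at step1
      have step2 := base_ineq _ _ hSa hSb
      have step3 := smul_le_smul_of_nonneg_left step2 (Real.sqrt_nonneg cn)
      have step4 := step3.trans step1
      rw [smul_smul, const_step n] at step4
      simp only [← Function.iterate_succ_apply' CFC.sqrt] at step4
      convert step4 using 3
      push_cast
      ring

lemma iterate_sqrt_eq_rpow {M : A'} (hM : 0 ≤ M) (n : ℕ) :
    CFC.sqrt^[n] M = M ^ (((2:ℝ)⁻¹) ^ n : ℝ) := by
  induction n with
  | zero => simp [CFC.rpow_one M hM]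
  | succ n IH =>
    rw [Function.iterate_succ_apply', IH, CFC.sqrt_eq_rpow,
      CFC.rpow_rpow_of_exponent_nonneg M _ _ (by positivity) (by norm_num) hM]
    congr 1
    rw [pow_succ]
    norm_num

lemma rpow_eq_cfc_real {M : A'} (hM : 0 ≤ M) {y : ℝ} :
    M ^ y = cfc (fun t : ℝ => t ^ y) M := by
  rw [CFC.rpow_def, cfc_nnreal_eq_real _ M hM]
  apply cfc_congr
  intro t ht
  have ht0 : 0 ≤ t := spectrum_nonneg_of_nonneg hM ht
  simp [NNReal.coe_rpow, Real.coe_toNNReal t ht0]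

lemma iterate_sqrt_eq_cfc {M : A'} (hM : 0 ≤ M) (n : ℕ) :
    CFC.sqrt^[n] M = cfc (fun t : ℝ => t ^ ((1:ℝ) / 2 ^ n)) M := by
  rw [iterate_sqrt_eq_rpow hM n, rpow_eq_cfc_real hM]
  congr 1
  ext t
  congr 1
  rw [one_div, inv_pow]

end Auxiliary

/-- For positive self-adjoint operators `A`, `B`, one has
`(A+B)^{1/2^n} ≥ 2^{-1+2^{-n}} (A^{1/2^n} + B^{1/2^n})` in the form sense,
for every positive integer `n`. -/
theorem statement1 {H : Type*} [NormedAddCommGroup H] [InnerProductSpace ℂ H]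
    [CompleteSpace H] (A B : H →L[ℂ] H) (hA : IsSelfAdjoint A) (hB : IsSelfAdjoint B)
    (hApos : ∀ x : H, 0 ≤ (⟪A x, x⟫_ℂ).re)
    (hBpos : ∀ x : H, 0 ≤ (⟪B x, x⟫_ℂ).re)
    (n : ℕ) (hn : 1 ≤ n) :
    ∀ x : H,
      (2:ℝ) ^ (-1 + (2:ℝ) ^ (-(n:ℝ))) *
        ((⟪cfc (fun t : ℝ => t ^ ((1:ℝ) / 2 ^ n)) A x, x⟫_ℂ).re +
         (⟪cfc (fun t : ℝ => t ^ ((1:ℝ) / 2 ^ n)) B x, x⟫_ℂ).re) ≤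
      (⟪cfc (fun t : ℝ => t ^ ((1:ℝ) / 2 ^ n)) (A + B) x, x⟫_ℂ).re := by
  intro x
  have hA0 : (0 : H →L[ℂ] H) ≤ A :=
    (ContinuousLinearMap.nonneg_iff_isPositive A).mpr ⟨ContinuousLinearMap.isSelfAdjoint_iff_isSymmetric.mp hA, fun y => hApos y⟩
  have hB0 : (0 : H →L[ℂ] H) ≤ B :=
    (ContinuousLinearMap.nonneg_iff_isPositive B).mpr ⟨ContinuousLinearMap.isSelfAdjoint_iff_isSymmetric.mp hB, fun y => hBpos y⟩
  have main := iter_ineq A B hA0 hB0 n hn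
  rw [iterate_sqrt_eq_cfc hA0 n, iterate_sqrt_eq_cfc hB0 n,
    iterate_sqrt_eq_cfc (add_nonneg hA0 hB0) n] at main
  set c := (2:ℝ) ^ (-1 + (2:ℝ) ^ (-(n:ℝ))) with hc
  set X := cfc (fun t : ℝ => t ^ ((1:ℝ) / 2 ^ n)) A with hX
  set Y := cfc (fun t : ℝ => t ^ ((1:ℝ) / 2 ^ n)) B with hY
  set Z := cfc (fun t : ℝ => t ^ ((1:ℝ) / 2 ^ n)) (A + B) with hZ
  have hpos := (ContinuousLinearMap.le_def _ _).mp main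
  have h := hpos.inner_nonneg_left x
  rw [ContinuousLinearMap.sub_apply, ContinuousLinearMap.smul_apply,
    ContinuousLinearMap.add_apply] at h
  rw [inner_sub_left] at h
  have hsm : ⟪c • (X x + Y x), x⟫_ℂ = (c : ℂ) * ⟪X x + Y x, x⟫_ℂ := by
    rw [show (c • (X x + Y x)) = (c : ℂ) • (X x + Y x) by simp, inner_smul_left]
    simp [inner_add_left]
  rw [hsm, inner_add_left] at h
  replace h := (Complex.nonneg_iff.mp h).1
  simp only [RCLike.re_to_complex, Complex.sub_re, Complex.add_re, Complex.mul_re,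
    Complex.ofReal_re, Complex.ofReal_im, zero_mul, sub_zero] at h ⊢
  linarith
end

section
/- Let S be a self-adjoint submarkovian semigroup on L_2 with kernel K satisfying ‖1_A S_t 1_A‖_{1→∞} ≤ V(t)^{-1} for all t > 0, where V is positive increasing and doubling with doubling dimension D̃. Then for each integer N > D̃ there is a_N > 0 with ‖1_A (I + t² H)^{-N} 1_A‖_{1→∞} ≤ a_N V(t²)^{-1} for all t > 0, where H is the generator of S. -/
open MeasureTheory

/-- If `n t = ‖1_A S_t 1_A‖_{1→∞}` satisfies `n t ≤ V(t)⁻¹` with `V` positive increasing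
and doubling with doubling dimension `D̃`, and if `m t = ‖1_A (I+t²H)^{-N} 1_A‖_{1→∞}`
satisfies the Laplace transform representation bound
`m t ≤ ((N-1)!)⁻¹ ∫₀^∞ s^{N-1} e^{-s} n(st²) ds`, then for each integer `N > D̃` there is
`a_N > 0` with `m t ≤ a_N V(t²)⁻¹` for all `t > 0`. -/
theorem statement8 (V n m : ℝ → ℝ) (a D : ℝ) (ha : 0 < a) (hD : 0 < D)
    (hVpos : ∀ t > (0:ℝ), 0 < V t)
    (hVmono : ∀ s t : ℝ, 0 < t → t ≤ s → V t ≤ V s)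
    (hVdoub : ∀ s t : ℝ, 0 < t → t ≤ s → V s ≤ a * (s / t) ^ D * V t)
    (hn0 : ∀ t > (0:ℝ), 0 ≤ n t)
    (hn : ∀ t > (0:ℝ), n t ≤ (V t)⁻¹)
    (N : ℕ) (hN : D < N)
    (hm : ∀ t > (0:ℝ), m t ≤ ((Nat.factorial (N - 1) : ℝ))⁻¹ *
      ∫ s in Set.Ioi (0:ℝ), s ^ (N - 1 : ℕ) * Real.exp (-s) * n (s * t ^ 2)) :
    ∃ aN > (0:ℝ), ∀ t > (0:ℝ), m t ≤ aN * (V (t ^ 2))⁻¹ := by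
  have hN1 : 1 ≤ N := by
    rcases Nat.eq_zero_or_pos N with h | h
    · exfalso; rw [h] at hN; simp at hN; linarith
    · exact h
  have hcast : ((N - 1 : ℕ) : ℝ) = (N : ℝ) - 1 := by
    push_cast [Nat.cast_sub hN1]; ring
  set h : ℝ → ℝ := fun s => s ^ (N - 1 : ℕ) * Real.exp (-s)
      + a * (s ^ ((N : ℝ) - 1 - D) * Real.exp (-s)) with hh
  have hNpos : (0:ℝ) < (N:ℝ) := by positivity
  have hint : IntegrableOn h (Set.Ioi 0) := by
    apply Integrable.add
    · have H := Real.GammaIntegral_convergent (s := (N:ℝ)) hNpos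
      refine H.congr_fun ?_ measurableSet_Ioi
      intro x hx
      show Real.exp (-x) * x ^ ((N:ℝ) - 1) = x ^ (N - 1 : ℕ) * Real.exp (-x)
      rw [mul_comm, ← hcast, Real.rpow_natCast]
    · have H := (Real.GammaIntegral_convergent (s := (N:ℝ) - D) (by linarith)).congr_fun
        (g := fun x => x ^ ((N : ℝ) - 1 - D) * Real.exp (-x)) ?_ measurableSet_Ioi
      · exact H.const_mul a
      · intro x hx
        show Real.exp (-x) * x ^ ((N:ℝ) - D - 1) = x ^ ((N : ℝ) - 1 - D) * Real.exp (-x)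
        rw [mul_comm]
        congr 1
        ring_nf
  set C : ℝ := ∫ s in Set.Ioi (0:ℝ), h s with hC
  refine ⟨max 1 (((Nat.factorial (N - 1) : ℝ))⁻¹ * C), lt_of_lt_of_le one_pos (le_max_left _ _), ?_⟩
  intro t ht
  have hVt : 0 < V (t ^ 2) := hVpos _ (by positivity)
  set c : ℝ := (V (t ^ 2))⁻¹ with hc
  have hcpos : 0 < c := by positivity
  have key : (∫ s in Set.Ioi (0:ℝ), s ^ (N - 1 : ℕ) * Real.exp (-s) * n (s * t ^ 2))
      ≤ ∫ s in Set.Ioi (0:ℝ), h s * c := by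
    apply integral_mono_of_nonneg
    · refine (ae_restrict_iff' measurableSet_Ioi).mpr (Filter.Eventually.of_forall ?_)
      intro s hs
      have hs' : (0:ℝ) < s := hs
      have : 0 ≤ n (s * t ^ 2) := hn0 _ (by positivity)
      positivity
    · exact hint.mul_const c
    · refine (ae_restrict_iff' measurableSet_Ioi).mpr (Filter.Eventually.of_forall ?_)
      intro s hs
      have hs' : (0:ℝ) < s := hs
      have hu : (0:ℝ) < s * t ^ 2 := by positivity
      have hVu : 0 < V (s * t ^ 2) := hVpos _ hu
      have hterm1 : (0:ℝ) ≤ s ^ (N - 1 : ℕ) * Real.exp (-s) := by positivity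
      rcases le_or_gt 1 s with hs1 | hs1
      · -- s ≥ 1
        have hmono : V (t ^ 2) ≤ V (s * t ^ 2) := hVmono _ _ (by positivity) (by nlinarith)
        have hnu : n (s * t ^ 2) ≤ c := (hn _ hu).trans (by
          rw [hc]; exact inv_anti₀ hVt hmono)
        have h1 : s ^ (N - 1 : ℕ) * Real.exp (-s) * n (s * t ^ 2)
            ≤ s ^ (N - 1 : ℕ) * Real.exp (-s) * c := by
          exact mul_le_mul_of_nonneg_left hnu hterm1
        have h2 : (0:ℝ) ≤ a * (s ^ ((N : ℝ) - 1 - D) * Real.exp (-s)) * c := by positivity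
        simp only [hh, add_mul]
        nlinarith
      · -- 0 < s < 1
        have hdoub := hVdoub (t ^ 2) (s * t ^ 2) hu (by nlinarith)
        have hratio : t ^ 2 / (s * t ^ 2) = s⁻¹ := by
          field_simp
        rw [hratio] at hdoub
        have hc2 : (0:ℝ) < a * s⁻¹ ^ D := by positivity
        have hinv : (V (s * t ^ 2))⁻¹ ≤ a * s⁻¹ ^ D * c := by
          rw [hc, ← div_eq_mul_inv, le_div_iff₀ hVt]
          calc (V (s * t ^ 2))⁻¹ * V (t ^ 2)
              ≤ (V (s * t ^ 2))⁻¹ * (a * s⁻¹ ^ D * V (s * t ^ 2)) :=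
                mul_le_mul_of_nonneg_left hdoub (by positivity)
            _ = a * s⁻¹ ^ D := by field_simp
        have hnu : n (s * t ^ 2) ≤ a * s⁻¹ ^ D * c := (hn _ hu).trans hinv
        have hpow : (s:ℝ) ^ (N - 1 : ℕ) * s⁻¹ ^ D = s ^ ((N : ℝ) - 1 - D) := by
          rw [← Real.rpow_natCast s (N - 1), hcast,
            Real.inv_rpow hs'.le, ← Real.rpow_neg hs'.le,
            ← Real.rpow_add hs']
          ring_nf
        have h1 : s ^ (N - 1 : ℕ) * Real.exp (-s) * n (s * t ^ 2)
            ≤ s ^ (N - 1 : ℕ) * Real.exp (-s) * (a * s⁻¹ ^ D * c) :=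
          mul_le_mul_of_nonneg_left hnu hterm1
        have heq : s ^ (N - 1 : ℕ) * Real.exp (-s) * (a * s⁻¹ ^ D * c)
            = a * (s ^ ((N : ℝ) - 1 - D) * Real.exp (-s)) * c := by
          rw [← hpow]; ring
        have h2 : (0:ℝ) ≤ s ^ (N - 1 : ℕ) * Real.exp (-s) * c := by positivity
        simp only [hh, add_mul]
        nlinarith [h1, heq ▸ h1]
  calc m t ≤ ((Nat.factorial (N - 1) : ℝ))⁻¹ *
      ∫ s in Set.Ioi (0:ℝ), s ^ (N - 1 : ℕ) * Real.exp (-s) * n (s * t ^ 2) := hm t ht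
    _ ≤ ((Nat.factorial (N - 1) : ℝ))⁻¹ * ∫ s in Set.Ioi (0:ℝ), h s * c := by
        apply mul_le_mul_of_nonneg_left key (by positivity)
    _ = ((Nat.factorial (N - 1) : ℝ))⁻¹ * C * c := by
        rw [integral_mul_const]; ring
    _ ≤ max 1 (((Nat.factorial (N - 1) : ℝ))⁻¹ * C) * c :=
        mul_le_mul_of_nonneg_right (le_max_right _ _) hcpos.le
end

section
/- Let D be a set of real continuous functions on a metric space (or on ℝ^d) closed under the operations ψ ↦ −ψ + c (c ∈ ℝ), and under finite maxima and minima. For x,y define d(x;y) = sup_{ψ∈D}(ψ(x) − ψ(y)) and for sets A, B set d(A;B) = inf_{x∈A, y∈B} d(x;y) and d̂(A;B) = sup_{ψ∈D} inf_{x∈A,y∈B}(ψ(x) − ψ(y)). If A and B are compact subsets, then d̂(A;B) = d(A;B). -/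
private lemma finset_sup'_mem {X : Type*} (D : Set (X → ℝ))
    (hmax : ∀ ψ₁ ∈ D, ∀ ψ₂ ∈ D, (fun x => max (ψ₁ x) (ψ₂ x)) ∈ D)
    {ι : Type*} (s : Finset ι) (hs : s.Nonempty) (f : ι → X → ℝ)
    (hf : ∀ i ∈ s, f i ∈ D) :
    (fun x => s.sup' hs (fun i => f i x)) ∈ D := by
  induction hs using Finset.Nonempty.cons_induction with
  | singleton a => simpa using hf a (by simp)
  | cons a s ha hs ih =>
    have h1 : f a ∈ D := hf a (by simp)
    have h2 := ih (fun i hi => hf i (by simp [hi]))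
    have := hmax _ h1 _ h2
    convert this using 1
    funext x
    rw [Finset.sup'_cons]


private lemma finset_inf'_mem {X : Type*} (D : Set (X → ℝ))
    (hmin : ∀ ψ₁ ∈ D, ∀ ψ₂ ∈ D, (fun x => min (ψ₁ x) (ψ₂ x)) ∈ D)
    {ι : Type*} (s : Finset ι) (hs : s.Nonempty) (f : ι → X → ℝ)
    (hf : ∀ i ∈ s, f i ∈ D) :
    (fun x => s.inf' hs (fun i => f i x)) ∈ D := by
  induction hs using Finset.Nonempty.cons_induction with
  | singleton a => simpa using hf a (by simp)
  | cons a s ha hs ih =>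
    have h1 : f a ∈ D := hf a (by simp)
    have h2 := ih (fun i hi => hf i (by simp [hi]))
    have := hmin _ h1 _ h2
    convert this using 1
    funext x
    rw [Finset.inf'_cons]


/-- Let `D` be a family of continuous real functions on a metric space, closed under
`ψ ↦ -ψ + c`, finite maxima and finite minima. Define `d(x;y) = sup_{ψ∈D}(ψx - ψy)`,
`d(A;B) = inf_{x∈A,y∈B} d(x;y)` and `d̂(A;B) = sup_{ψ∈D} inf_{x∈A,y∈B}(ψx - ψy)`.
Then `d̂(A;B) = d(A;B)` for nonempty compact `A`, `B`. -/
theorem statement9 {X : Type*} [MetricSpace X] (D : Set (X → ℝ))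
    (hcont : ∀ ψ ∈ D, Continuous ψ)
    (hneg : ∀ ψ ∈ D, ∀ c : ℝ, (fun x => -ψ x + c) ∈ D)
    (hmax : ∀ ψ₁ ∈ D, ∀ ψ₂ ∈ D, (fun x => max (ψ₁ x) (ψ₂ x)) ∈ D)
    (hmin : ∀ ψ₁ ∈ D, ∀ ψ₂ ∈ D, (fun x => min (ψ₁ x) (ψ₂ x)) ∈ D)
    (A B : Set X) (hA : IsCompact A) (hB : IsCompact B)
    (hAne : A.Nonempty) (hBne : B.Nonempty) :
    (⨆ ψ ∈ D, ⨅ x ∈ A, ⨅ y ∈ B, ((ψ x - ψ y : ℝ) : EReal)) =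
      ⨅ x ∈ A, ⨅ y ∈ B, ⨆ ψ ∈ D, ((ψ x - ψ y : ℝ) : EReal) := by
  apply le_antisymm
  · -- easy direction: sup-inf ≤ inf-sup
    apply iSup₂_le
    intro ψ hψ
    apply le_iInf₂
    intro x hx
    apply le_iInf₂
    intro y hy
    refine le_trans ?_ (le_iSup₂ (f := fun ψ (_ : ψ ∈ D) => ((ψ x - ψ y : ℝ) : EReal)) ψ hψ)
    exact iInf₂_le_of_le x hx (iInf₂_le y hy)
  · rw [← EReal.ge_of_forall_gt_iff_ge]
    intro r hr
    obtain ⟨t, hrt, htRHS⟩ := EReal.exists_between_coe_real hr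
    -- the shifted function z ↦ ψ z - ψ y is in D
    have hshift : ∀ ψ ∈ D, ∀ y : X, (fun z => ψ z - ψ y) ∈ D := by
      intro ψ hψ y
      have h1 := hneg ψ hψ 0
      have h2 := hneg _ h1 (-ψ y)
      convert h2 using 1
      funext z; ring
    -- pointwise: for x ∈ A, y ∈ B, exists φ ∈ D with φ y = 0 and t < φ x
    have hpt : ∀ x ∈ A, ∀ y ∈ B, ∃ φ ∈ D, φ y = 0 ∧ t < φ x := by
      intro x hx y hy
      have h1 : (t : EReal) < ⨆ ψ ∈ D, ((ψ x - ψ y : ℝ) : EReal) :=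
        lt_of_lt_of_le htRHS (iInf₂_le_of_le x hx (iInf₂_le y hy))
      rw [lt_iSup_iff] at h1
      obtain ⟨ψ, h1⟩ := h1
      rw [lt_iSup_iff] at h1
      obtain ⟨hψ, h1⟩ := h1
      rw [EReal.coe_lt_coe_iff] at h1
      exact ⟨fun z => ψ z - ψ y, hshift ψ hψ y, by simp, by simpa using h1⟩
    -- Step A: for each y ∈ B, a single φ ∈ D with φ y = 0 and t < φ x for all x ∈ A
    have stepA : ∀ y ∈ B, ∃ φ ∈ D, φ y = 0 ∧ ∀ x ∈ A, t < φ x := by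
      intro y hy
      choose! Φ hΦD hΦy hΦx using fun x (hx : x ∈ A) => hpt x hx y hy
      have hcov : A ⊆ ⋃ x ∈ A, {z | t < Φ x z} :=
        fun x hx => Set.mem_biUnion hx (hΦx x hx)
      obtain ⟨b, hbA, hbfin, hbcov⟩ := hA.elim_finite_subcover_image
        (fun x hx => isOpen_lt continuous_const (hcont _ (hΦD x hx))) hcov
      obtain ⟨x₀, hx₀⟩ := hAne
      have hbne : b.Nonempty := by
        rcases Set.mem_iUnion₂.mp (hbcov hx₀) with ⟨x, hxb, _⟩
        exact ⟨x, hxb⟩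
      set sF := hbfin.toFinset with hsF
      have hsFne : sF.Nonempty := by simpa [hsF] using hbne
      refine ⟨fun z => sF.sup' hsFne (fun x => Φ x z), ?_, ?_, ?_⟩
      · exact finset_sup'_mem D hmax sF hsFne _
          (fun x hx => hΦD x (hbA (hbfin.mem_toFinset.mp hx)))
      · apply le_antisymm
        · apply Finset.sup'_le
          intro x hx
          exact le_of_eq (hΦy x (hbA (hbfin.mem_toFinset.mp hx)))
        · obtain ⟨x, hx⟩ := hsFne
          calc (0:ℝ) = Φ x y := (hΦy x (hbA (hbfin.mem_toFinset.mp hx))).symm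
          _ ≤ _ := Finset.le_sup' (fun x' => Φ x' y) hx
      · intro x hx
        rcases Set.mem_iUnion₂.mp (hbcov hx) with ⟨x', hx'b, hx'⟩
        calc t < Φ x' x := hx'
        _ ≤ _ := Finset.le_sup' (fun x' => Φ x' x) (hbfin.mem_toFinset.mpr hx'b)
    -- Step B: min over a finite cover of B
    choose! Ψ hΨD hΨy hΨx using stepA
    have hε : (0:ℝ) < t - r := by
      rw [EReal.coe_lt_coe_iff] at hrt; linarith
    have hcov : B ⊆ ⋃ y ∈ B, {z | Ψ y z < t - r} := by
      intro y hy
      exact Set.mem_biUnion hy (by simp [hΨy y hy]; linarith)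
    obtain ⟨b, hbB, hbfin, hbcov⟩ := hB.elim_finite_subcover_image
      (fun y hy => isOpen_lt (hcont _ (hΨD y hy)) continuous_const) hcov
    obtain ⟨y₀, hy₀⟩ := hBne
    have hbne : b.Nonempty := by
      rcases Set.mem_iUnion₂.mp (hbcov hy₀) with ⟨y, hyb, _⟩
      exact ⟨y, hyb⟩
    set sF := hbfin.toFinset with hsF
    have hsFne : sF.Nonempty := by simpa [hsF] using hbne
    set ψ : X → ℝ := fun z => sF.inf' hsFne (fun y => Ψ y z) with hψdef
    have hψD : ψ ∈ D := finset_inf'_mem D hmin sF hsFne _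
      (fun y hy => hΨD y (hbB (hbfin.mem_toFinset.mp hy)))
    have hψA : ∀ x ∈ A, t < ψ x := by
      intro x hx
      apply Finset.lt_inf'_iff .. |>.mpr
      intro y hy
      exact hΨx y (hbB (hbfin.mem_toFinset.mp hy)) x hx
    have hψB : ∀ y ∈ B, ψ y < t - r := by
      intro y hy
      rcases Set.mem_iUnion₂.mp (hbcov hy) with ⟨y', hy'b, hy'⟩
      calc ψ y ≤ Ψ y' y := Finset.inf'_le _ (hbfin.mem_toFinset.mpr hy'b)
      _ < t - r := hy'
    refine le_trans ?_ (le_iSup₂ (f := fun ψ (_ : ψ ∈ D) => ⨅ x ∈ A, ⨅ y ∈ B, ((ψ x - ψ y : ℝ) : EReal)) ψ hψD)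
    apply le_iInf₂
    intro x hx
    apply le_iInf₂
    intro y hy
    rw [EReal.coe_le_coe_iff]
    have := hψA x hx
    have := hψB y hy
    linarith
end

section
/- Let H₁, H₂ be positive self-adjoint operators on L₂, A a measurable set, and ρ > 0 such that 1_A cos(tH₁^{1/2}) 1_A = 1_A cos(tH₂^{1/2}) 1_A for all |t| ≤ ρ. Then 1_A cos(2tH₁^{1/2}) 1_A = 1_A cos(2tH₂^{1/2}) 1_A for all |t| ≤ ρ, provided additionally cos(tH_i^{1/2})φ_A is the same function for both operators for each φ_A ∈ L₂(A) and |t| ≤ ρ. Consequently, for every even bounded Borel function Ψ with Fourier transform supported in [−2ρ, 2ρ], 1_A Ψ(H₁^{1/2}) 1_A = 1_A Ψ(H₂^{1/2}) 1_A. -/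
open scoped InnerProductSpace

lemma cfc_parametric {E : Type*} [NormedAddCommGroup E] [InnerProductSpace ℂ E]
    [CompleteSpace E] (a : E →L[ℂ] E) (ha : IsSelfAdjoint a) (f : ℝ → ℝ → ℝ)
    (hf : Continuous fun p : ℝ × ℝ => f p.1 p.2) (α β : ℝ) :
    Continuous (fun t => cfc (fun x => f t x) a) ∧
    cfc (fun x => ∫ t in α..β, f t x) a = ∫ t in α..β, cfc (fun x => f t x) a := by
  set K := spectrum ℝ a
  let F : C(ℝ × K, ℝ) := ⟨fun p => f p.1 p.2.1, hf.comp (continuous_fst.prodMk (continuous_subtype_val.comp continuous_snd))⟩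
  let G : C(ℝ, C(K, ℝ)) := F.curry
  have hGint : IntervalIntegrable (fun t => G t) MeasureTheory.volume α β :=
    G.continuous.intervalIntegrable α β
  have heval : ∀ x : K, (∫ t in α..β, G t) x = ∫ t in α..β, f t x.1 := by
    intro x
    exact ((ContinuousMap.evalCLM ℝ x).intervalIntegral_comp_comm hGint).symm
  have hres : K.domRestrict (fun x => ∫ t in α..β, f t x) = ⇑(∫ t in α..β, G t) := by
    funext x
    exact (heval x).symm
  have hcont : ContinuousOn (fun x => ∫ t in α..β, f t x) K := by
    rw [continuousOn_iff_continuous_restrict, hres]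
    exact (∫ t in α..β, G t).continuous
  have hGt : ∀ t : ℝ, cfc (fun x => f t x) a = cfcL (R := ℝ) ha (G t) := by
    intro t
    rw [cfc_apply (fun x => f t x) a ha (hf.comp (by fun_prop : Continuous fun x : ℝ => (t, x))).continuousOn]
    congr 1
  have hcont2 : Continuous (fun t => cfc (fun x => f t x) a) := by
    simp only [hGt]
    exact (cfcL (R := ℝ) ha).continuous.comp G.continuous
  refine ⟨hcont2, ?_⟩
  rw [cfc_apply (fun x => ∫ t in α..β, f t x) a ha hcont]
  have : (⟨K.domRestrict (fun x => ∫ t in α..β, f t x), hcont.restrict⟩ : C(K, ℝ)) = ∫ t in α..β, G t := by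
    ext x
    exact (heval x).symm
  rw [this]
  show (cfcL (R := ℝ) ha) (∫ t in α..β, G t) = _
  rw [← (cfcL (R := ℝ) ha).intervalIntegral_comp_comm hGint]
  refine intervalIntegral.integral_congr fun t _ => ?_
  exact (hGt t).symm


set_option maxHeartbeats 1000000 in
/-- If the wave propagators of two positive self-adjoint operators agree on the range of a
self-adjoint projection `P` (multiplication by `1_A`) for `|t| ≤ ρ`, i.e.
`cos(tH₁^{1/2})(Pφ) = cos(tH₂^{1/2})(Pφ)`, then `P cos(2tH₁^{1/2}) P = P cos(2tH₂^{1/2}) P`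
for `|t| ≤ ρ`, and `P Ψ(H₁^{1/2}) P = P Ψ(H₂^{1/2}) P` for every even bounded function `Ψ`
whose Fourier transform is supported in `[-2ρ, 2ρ]`, i.e. such that
`Ψ(λ) = (2π)^{-1/2} ∫_{-2ρ}^{2ρ} Ψ̃(t) cos(tλ) dt` for `λ ≥ 0`. -/
theorem statement12 {E : Type*} [NormedAddCommGroup E] [InnerProductSpace ℂ E]
    [CompleteSpace E] (H₁ H₂ P : E →L[ℂ] E)
    (hH₁ : IsSelfAdjoint H₁) (hH₂ : IsSelfAdjoint H₂) (hP : IsSelfAdjoint P)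
    (hPidem : P ∘L P = P)
    (hH₁pos : ∀ x : E, 0 ≤ (⟪H₁ x, x⟫_ℂ).re) (hH₂pos : ∀ x : E, 0 ≤ (⟪H₂ x, x⟫_ℂ).re)
    (ρ : ℝ) (hρ : 0 < ρ)
    (hagree : ∀ t : ℝ, |t| ≤ ρ → ∀ φ : E,
      cfc (fun x : ℝ => Real.cos (t * Real.sqrt x)) H₁ (P φ) =
      cfc (fun x : ℝ => Real.cos (t * Real.sqrt x)) H₂ (P φ)) :
    (∀ t : ℝ, |t| ≤ ρ →
      P ∘L cfc (fun x : ℝ => Real.cos (2 * t * Real.sqrt x)) H₁ ∘L P =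
      P ∘L cfc (fun x : ℝ => Real.cos (2 * t * Real.sqrt x)) H₂ ∘L P) ∧
    (∀ Ψ Ψt : ℝ → ℝ, Continuous Ψ → (∀ u : ℝ, Ψ (-u) = Ψ u) → Continuous Ψt →
      (∀ t : ℝ, 2 * ρ < |t| → Ψt t = 0) →
      (∀ l : ℝ, 0 ≤ l →
        Ψ l = (2 * Real.pi) ^ (-(1:ℝ)/2) * ∫ t in (-(2*ρ))..(2*ρ), Ψt t * Real.cos (t * l)) →
      P ∘L cfc (fun x : ℝ => Ψ (Real.sqrt x)) H₁ ∘L P =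
      P ∘L cfc (fun x : ℝ => Ψ (Real.sqrt x)) H₂ ∘L P) := by
  -- notation: composition is multiplication
  have hmul : ∀ (A B : E →L[ℂ] E), A ∘L B = A * B := fun _ _ => rfl
  -- Part 1
  have part1 : ∀ t : ℝ, |t| ≤ ρ →
      P ∘L cfc (fun x : ℝ => Real.cos (2 * t * Real.sqrt x)) H₁ ∘L P =
      P ∘L cfc (fun x : ℝ => Real.cos (2 * t * Real.sqrt x)) H₂ ∘L P := by
    intro t ht
    set c : ℝ → ℝ := fun x => Real.cos (t * Real.sqrt x) with hc
    have hccont : Continuous c := Real.continuous_cos.comp (continuous_const.mul Real.continuous_sqrt)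
    set C₁ := cfc c H₁ with hC1
    set C₂ := cfc c H₂ with hC2
    have hdouble : ∀ (H : E →L[ℂ] E), IsSelfAdjoint H →
        cfc (fun x : ℝ => Real.cos (2 * t * Real.sqrt x)) H = (2:ℝ) • (cfc c H * cfc c H) - 1 := by
      intro H hH
      have hfun : (fun x : ℝ => Real.cos (2 * t * Real.sqrt x)) =
          fun x : ℝ => (2:ℝ) * (c x * c x) - (fun _ : ℝ => (1:ℝ)) x := by
        funext x
        rw [mul_assoc, Real.cos_two_mul]
        simp [hc, sq]
      have h1 : cfc (fun _ : ℝ => (1:ℝ)) H = 1 := cfc_one ℝ H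
      rw [hfun, cfc_sub _ _ H (by fun_prop) (by fun_prop),
        cfc_const_mul (2:ℝ) (fun x => c x * c x) H (by fun_prop),
        cfc_mul _ _ H (by fun_prop) (by fun_prop), h1]
    have hsa1 : IsSelfAdjoint C₁ := cfc_predicate c H₁
    have hsa2 : IsSelfAdjoint C₂ := cfc_predicate c H₂
    have hCP : C₁ * P = C₂ * P := by
      ext φ
      exact hagree t ht φ
    have hPC : P * C₁ = P * C₂ := by
      have h := congrArg star hCP
      rwa [star_mul, star_mul, hP.star_eq, hsa1.star_eq, hsa2.star_eq] at h
    rw [hmul, hmul, hmul, hmul, hdouble H₁ hH₁, hdouble H₂ hH₂]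
    have expand : ∀ C : E →L[ℂ] E,
        P * (((2:ℝ) • (C * C) - 1) * P) = (2:ℝ) • (P * (C * (C * P))) - P * P := by
      intro C
      simp only [sub_mul, one_mul, mul_sub, smul_mul_assoc, mul_smul_comm, mul_assoc]
    rw [expand, expand,
      show P * (C₁ * (C₁ * P)) = (P * C₁) * (C₁ * P) from by rw [mul_assoc],
      show P * (C₂ * (C₂ * P)) = (P * C₂) * (C₂ * P) from by rw [mul_assoc],
      hCP, hPC]
  refine ⟨part1, ?_⟩
  -- Part 2
  intro Ψ Ψt hΨ hΨeven hΨt hsupp hrep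
  set c' : ℝ := (2 * Real.pi) ^ (-(1:ℝ)/2) with hc'
  set f : ℝ → ℝ → ℝ := fun t x => c' * (Ψt t * Real.cos (t * Real.sqrt x)) with hf
  have hfcont : Continuous fun p : ℝ × ℝ => f p.1 p.2 := by
    apply continuous_const.mul
    exact ((hΨt.comp continuous_fst).mul (Real.continuous_cos.comp
      ((continuous_fst).mul (Real.continuous_sqrt.comp continuous_snd))))
  have hfun : (fun x : ℝ => Ψ (Real.sqrt x)) = fun x : ℝ => ∫ t in (-(2*ρ))..(2*ρ), f t x := by
    funext x
    rw [hrep (Real.sqrt x) (Real.sqrt_nonneg x), ← intervalIntegral.integral_const_mul]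
  -- for each selfadjoint H, express cfc as an integral
  have hint : ∀ (H : E →L[ℂ] E), IsSelfAdjoint H →
      P ∘L cfc (fun x : ℝ => Ψ (Real.sqrt x)) H ∘L P =
      ∫ t in (-(2*ρ))..(2*ρ), P ∘L cfc (fun x => f t x) H ∘L P := by
    intro H hH
    obtain ⟨hcont, hrepr⟩ := cfc_parametric H hH f hfcont (-(2*ρ)) (2*ρ)
    rw [hfun, hrepr]
    set L : (E →L[ℂ] E) →L[ℝ] (E →L[ℂ] E) :=
      (((ContinuousLinearMap.mul ℝ (E →L[ℂ] E)).flip P)).comp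
        ((ContinuousLinearMap.mul ℝ (E →L[ℂ] E)) P) with hL
    have hLx : ∀ X : E →L[ℂ] E, L X = P ∘L X ∘L P := fun X => rfl
    have hIint : IntervalIntegrable (fun t => cfc (fun x => f t x) H)
        MeasureTheory.volume (-(2*ρ)) (2*ρ) := hcont.intervalIntegrable _ _
    calc P ∘L (∫ t in (-(2*ρ))..(2*ρ), cfc (fun x => f t x) H) ∘L P
        = L (∫ t in (-(2*ρ))..(2*ρ), cfc (fun x => f t x) H) := rfl
      _ = ∫ t in (-(2*ρ))..(2*ρ), L (cfc (fun x => f t x) H) :=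
          (L.intervalIntegral_comp_comm hIint).symm
      _ = ∫ t in (-(2*ρ))..(2*ρ), P ∘L cfc (fun x => f t x) H ∘L P := rfl
  rw [hint H₁ hH₁, hint H₂ hH₂]
  refine intervalIntegral.integral_congr fun s hs => ?_
  -- s ∈ uIcc (-(2ρ)) (2ρ), so |s| ≤ 2ρ
  have hs' : |s| ≤ 2 * ρ := by
    rw [Set.uIcc_of_le (by linarith : -(2*ρ) ≤ 2*ρ)] at hs
    rw [abs_le]
    exact ⟨hs.1, hs.2⟩
  have hs2 : |s / 2| ≤ ρ := by
    rw [abs_div]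
    rw [abs_of_pos (by norm_num : (0:ℝ) < 2)]
    linarith [abs_nonneg s, hs']
  have hcos := part1 (s / 2) hs2
  have h2s : (fun x : ℝ => Real.cos (2 * (s/2) * Real.sqrt x)) =
      fun x : ℝ => Real.cos (s * Real.sqrt x) := by
    funext x
    rw [show 2 * (s/2) = s by ring]
  rw [h2s] at hcos
  -- f s x = (c' * Ψt s) • cos (s √x)
  have hsmul : ∀ (H : E →L[ℂ] E), IsSelfAdjoint H →
      cfc (fun x => f s x) H = (c' * Ψt s) • cfc (fun x : ℝ => Real.cos (s * Real.sqrt x)) H := by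
    intro H hH
    have : (fun x => f s x) = fun x : ℝ => (c' * Ψt s) * Real.cos (s * Real.sqrt x) := by
      funext x; simp only [hf]; ring
    rw [this, cfc_const_mul (c' * Ψt s) (fun x : ℝ => Real.cos (s * Real.sqrt x)) H (by fun_prop)]
  rw [hsmul H₁ hH₁, hsmul H₂ hH₂]
  rw [hmul, hmul, hmul, hmul] at hcos ⊢
  rw [smul_mul_assoc, smul_mul_assoc, mul_smul_comm, mul_smul_comm, hcos]
end
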